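/- Let G be a vertex-minimal non-(1_1,...,1_a,0_1,...,0_b)-colorable graph, v ∈ V(G) with deg(v) < 2a + b, and c a coloring of G−v. Then v has at least 2a + b − deg(v) neighbors that are 1-saturated (colored with a type-1 color also used by one of their neighbors) and whose colors appear exactly once among the neighbors of v. -/

import Mathlib

/-- `G` is `(1_1,…,1_a,0_1,…,0_b)`-colorable: `a + b` colors, the first `a` classes induce
subgraphs of maximum degree at most `1`, the last `b` classes are independent sets. -/
def DColorable {V : Type*} (G : SimpleGraph V) (a b : ℕ) : Prop :=
  ∃ f : V → Fin (a + b),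
    (∀ v, (f v : ℕ) < a → {w | G.Adj v w ∧ f w = f v}.Subsingleton) ∧
    (∀ v, a ≤ (f v : ℕ) → ∀ w, G.Adj v w → f w ≠ f v)

/-- `f` is a coloring of `G - v`: on vertices other than `v`, the first `a` (type-1) color
classes induce subgraphs of maximum degree at most `1` and the last `b` (type-0) color
classes are independent sets. -/
def PartialColoring {V : Type*} (G : SimpleGraph V) (a b : ℕ) (v : V)
    (f : V → Fin (a + b)) : Prop :=
  (∀ u, u ≠ v → (f u : ℕ) < a →
    {w | w ≠ v ∧ G.Adj u w ∧ f w = f u}.Subsingleton) ∧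
  (∀ u, u ≠ v → a ≤ (f u : ℕ) → ∀ w, w ≠ v → G.Adj u w → f w ≠ f u)

/-- In a coloring of `G - v`, a vertex `u` is saturated if it has a type-0 color
(index `≥ a`), or it has a type-1 color shared with one of its neighbors in `G - v`. -/
def Saturated {V : Type*} (G : SimpleGraph V) (a b : ℕ) (v : V)
    (f : V → Fin (a + b)) (u : V) : Prop :=
  a ≤ (f u : ℕ) ∨ ((f u : ℕ) < a ∧ ∃ w, w ≠ v ∧ G.Adj u w ∧ f w = f u)

/-- In a coloring of `G - v`, a vertex `u` is 1-saturated if it has a type-1 color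
(index `< a`) shared with one of its neighbors in `G - v`. -/
def OneSaturated {V : Type*} (G : SimpleGraph V) (a b : ℕ) (v : V)
    (f : V → Fin (a + b)) (u : V) : Prop :=
  (f u : ℕ) < a ∧ ∃ w, w ≠ v ∧ G.Adj u w ∧ f w = f u

/-- The color of the neighbor `u` of `v` appears exactly once among the neighbors of `v`. -/
def UniqueColor {V : Type*} (G : SimpleGraph V) {n : ℕ} (v : V)
    (f : V → Fin n) (u : V) : Prop :=
  ∀ w, G.Adj v w → f w = f u → w = u

lemma extend_col {V : Type*} (G : SimpleGraph V) (a b : ℕ) (v : V)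
    (f : V → Fin (a + b)) (hf : PartialColoring G a b v f) (i : Fin (a + b))
    (h1 : (i : ℕ) < a → ({w | G.Adj v w ∧ f w = i}.Subsingleton ∧
      ∀ u, G.Adj v u → f u = i → ¬∃ w, w ≠ v ∧ G.Adj u w ∧ f w = f u))
    (h0 : a ≤ (i : ℕ) → ∀ u, G.Adj v u → f u ≠ i) :
    DColorable G a b := by
  classical
  set g := Function.update f v i with hg
  have hgv : g v = i := Function.update_self v i f
  have hgw : ∀ w, w ≠ v → g w = f w := fun w hw => Function.update_of_ne hw i f
  refine ⟨g, ?_, ?_⟩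
  · intro u hu x hx y hy
    by_cases huv : u = v
    · subst huv
      rw [hgv] at hu hx hy
      have hxv : x ≠ u := (G.ne_of_adj hx.1).symm
      have hyv : y ≠ u := (G.ne_of_adj hy.1).symm
      exact (h1 hu).1 ⟨hx.1, (hgw x hxv).symm.trans hx.2⟩ ⟨hy.1, (hgw y hyv).symm.trans hy.2⟩
    · have hgu : g u = f u := hgw u huv
      rw [hgu] at hu hx hy
      by_cases hxv : x = v
      · by_cases hyv : y = v
        · rw [hxv, hyv]
        · exfalso
          subst hxv
          have hiu : i = f u := hgv ▸ hx.2
          have hia : (i : ℕ) < a := by rw [hiu]; exact hu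
          exact (h1 hia).2 u (G.adj_symm hx.1) hiu.symm
            ⟨y, hyv, hy.1, (hgw y hyv).symm.trans hy.2⟩
      · by_cases hyv : y = v
        · exfalso
          subst hyv
          have hiu : i = f u := hgv ▸ hy.2
          have hia : (i : ℕ) < a := by rw [hiu]; exact hu
          exact (h1 hia).2 u (G.adj_symm hy.1) hiu.symm
            ⟨x, hxv, hx.1, (hgw x hxv).symm.trans hx.2⟩
        · exact hf.1 u huv hu ⟨hxv, hx.1, (hgw x hxv).symm.trans hx.2⟩
            ⟨hyv, hy.1, (hgw y hyv).symm.trans hy.2⟩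
  · intro u hu w hadj hEq
    by_cases huv : u = v
    · subst huv
      rw [hgv] at hu hEq
      have hwv : w ≠ u := (G.ne_of_adj hadj).symm
      exact h0 hu w hadj ((hgw w hwv).symm.trans hEq)
    · have hgu : g u = f u := hgw u huv
      rw [hgu] at hu hEq
      by_cases hwv : w = v
      · subst hwv
        have hiu : i = f u := hgv ▸ hEq
        by_cases hia : a ≤ (i : ℕ)
        · exact h0 hia u (G.adj_symm hadj) hiu.symm
        · push_neg at hia
          have : (i : ℕ) = (f u : ℕ) := by rw [hiu]
          omega
      · exact hf.2 u huv hu w hwv hadj ((hgw w hwv).symm.trans hEq)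

/-- If `G` is vertex-minimal non-`(1_1,…,1_a,0_1,…,0_b)`-colorable, `deg(v) < 2a + b`,
and `f` is a coloring of `G - v`, then `v` has at least `2a + b - deg(v)` neighbors that
are 1-saturated and whose colors appear exactly once among the neighbors of `v`. -/
theorem stmt5 {V : Type*} [Fintype V] (G : SimpleGraph V) [DecidableRel G.Adj]
    (a b : ℕ) (ha : 1 ≤ a)
    (hnc : ¬ DColorable G a b)
    (hmin : ∀ x : V, DColorable (G.induce {x}ᶜ) a b)
    (v : V) (hdeg : G.degree v < 2 * a + b)
    (f : V → Fin (a + b)) (hf : PartialColoring G a b v f) :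
    2 * a + b - G.degree v ≤
      {u | G.Adj v u ∧ OneSaturated G a b v f u ∧ UniqueColor G v f u}.ncard := by
  classical
  set N : Fin (a + b) → Finset V :=
    fun i => (G.neighborFinset v).filter (fun u => f u = i) with hNdef
  have hmemN : ∀ i u, u ∈ N i ↔ G.Adj v u ∧ f u = i := by
    intro i u
    simp [hNdef, SimpleGraph.mem_neighborFinset]
  -- type-0 colors must appear among neighbors
  have hclaim0 : ∀ i : Fin (a + b), a ≤ (i : ℕ) → 1 ≤ (N i).card := by
    intro i hi
    by_contra h
    push_neg at h
    have hN0 : N i = ∅ := Finset.card_eq_zero.mp (by omega)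
    refine hnc (extend_col G a b v f hf i (fun h' => absurd hi (by omega)) ?_)
    intro _ u hu hfu
    have : u ∈ N i := (hmemN i u).2 ⟨hu, hfu⟩
    simp [hN0] at this
  -- type-1 colors: either ≥ 2 neighbors, or exactly one which is 1-saturated
  have hclaim1 : ∀ i : Fin (a + b), (i : ℕ) < a →
      2 ≤ (N i).card ∨ ((N i).card = 1 ∧ ∀ u ∈ N i, OneSaturated G a b v f u) := by
    intro i hi
    by_cases h2 : 2 ≤ (N i).card
    · exact Or.inl h2
    · right
      push_neg at h2
      have hsub : ∀ x ∈ N i, ∀ y ∈ N i, x = y := Finset.card_le_one.mp (by omega)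
      by_cases hsat : ∃ u ∈ N i, ∃ w, w ≠ v ∧ G.Adj u w ∧ f w = f u
      · obtain ⟨u, hu, hw⟩ := hsat
        have hc1 : (N i).card = 1 :=
          le_antisymm (by omega) (Finset.card_pos.mpr ⟨u, hu⟩)
        refine ⟨hc1, ?_⟩
        intro x hx
        have hxu : x = u := hsub x hx u hu
        subst hxu
        exact ⟨by rw [((hmemN i x).1 hx).2]; exact hi, hw⟩
      · exfalso
        push_neg at hsat
        refine hnc (extend_col G a b v f hf i
          (fun _ => ⟨?_, ?_⟩) (fun h' => absurd h' (by omega)))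
        · intro x hx y hy
          exact hsub x ((hmemN i x).2 hx) y ((hmemN i y).2 hy)
        · rintro u hadj hfu ⟨w, hwv, haw, hfw⟩
          exact hsat u ((hmemN i u).2 ⟨hadj, hfu⟩) w hwv haw hfw
  -- degree is sum of color-class counts among neighbors
  have hdeg_eq : G.degree v = ∑ i : Fin (a + b), (N i).card := by
    rw [← SimpleGraph.card_neighborFinset_eq_degree]
    exact Finset.card_eq_sum_card_fiberwise (fun x _ => Finset.mem_univ (f x))
  set A : Finset (Fin (a + b)) := Finset.univ.filter (fun i => (i : ℕ) < a) with hAdef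
  set T : Finset (Fin (a + b)) := A.filter (fun i => (N i).card = 1) with hTdef
  have hAcard : A.card = a := by
    have h1 : A.card = ∑ i : Fin (a + b), if (i : ℕ) < a then 1 else 0 :=
      Finset.card_filter _ _
    rw [h1, Fin.sum_univ_eq_sum_range (fun i => if i < a then 1 else 0),
      ← Finset.card_filter]
    have : (Finset.range (a + b)).filter (fun i => i < a) = Finset.range a := by
      ext x
      simp only [Finset.mem_filter, Finset.mem_range]
      omega
    rw [this, Finset.card_range]
  have hsumA : 2 * a ≤ (∑ i ∈ A, (N i).card) + T.card := by
    have hstep : ∀ i ∈ A, 2 ≤ (N i).card + (if (N i).card = 1 then 1 else 0) := by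
      intro i hi
      have hi' : (i : ℕ) < a := (Finset.mem_filter.mp hi).2
      rcases hclaim1 i hi' with h | h
      · omega
      · rw [h.1]; norm_num
    have h2 : ∑ i ∈ A, 2 ≤ ∑ i ∈ A, ((N i).card + (if (N i).card = 1 then 1 else 0)) :=
      Finset.sum_le_sum hstep
    rw [Finset.sum_const, smul_eq_mul, Finset.sum_add_distrib, ← Finset.card_filter,
      ← hTdef, hAcard] at h2
    omega
  have hsumB : b ≤ ∑ i ∈ Finset.univ.filter (fun i : Fin (a + b) => ¬ (i : ℕ) < a),
      (N i).card := by
    have hc : (Finset.univ.filter (fun i : Fin (a + b) => ¬ (i : ℕ) < a)).card = b := by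
      have := Finset.card_filter_add_card_filter_not
        (s := (Finset.univ : Finset (Fin (a + b)))) (p := fun i => (i : ℕ) < a)
      rw [Finset.card_univ, Fintype.card_fin] at this
      rw [← hAdef] at this
      omega
    calc b = ∑ i ∈ Finset.univ.filter (fun i : Fin (a + b) => ¬ (i : ℕ) < a), 1 := by
            rw [Finset.sum_const, hc]; ring
      _ ≤ _ := Finset.sum_le_sum (fun i hi => hclaim0 i
            (le_of_not_gt ((Finset.mem_filter.mp hi).2)))
  have hsplit : ∑ i : Fin (a + b), (N i).card =
      (∑ i ∈ A, (N i).card) +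
      ∑ i ∈ Finset.univ.filter (fun i : Fin (a + b) => ¬ (i : ℕ) < a), (N i).card := by
    rw [hAdef]
    exact (Finset.sum_filter_add_sum_filter_not _ _ _).symm
  have hTbound : 2 * a + b ≤ G.degree v + T.card := by
    rw [hdeg_eq, hsplit]
    omega
  -- inject T into the target set
  set S : Finset V := Finset.univ.filter
    (fun u => G.Adj v u ∧ OneSaturated G a b v f u ∧ UniqueColor G v f u) with hSdef
  have hset : {u | G.Adj v u ∧ OneSaturated G a b v f u ∧ UniqueColor G v f u} = ↑S := by
    ext u
    simp [hSdef]
  rw [hset, Set.ncard_coe_finset]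
  set φ : Fin (a + b) → V := fun i => if h : (N i).Nonempty then h.choose else v with hφ
  have hφmem : ∀ i ∈ T, φ i ∈ N i := by
    intro i hi
    have hne : (N i).Nonempty := Finset.card_pos.mp (by
      rw [(Finset.mem_filter.mp hi).2]; omega)
    simp only [hφ, dif_pos hne]
    exact hne.choose_spec
  have hmaps : ∀ i ∈ T, φ i ∈ S := by
    intro i hi
    obtain ⟨hiA, hc1⟩ := Finset.mem_filter.mp hi
    have hia : (i : ℕ) < a := (Finset.mem_filter.mp hiA).2
    have hu := hφmem i hi
    obtain ⟨hadj, hfu⟩ := (hmemN i (φ i)).1 hu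
    have hsat : OneSaturated G a b v f (φ i) := by
      rcases hclaim1 i hia with h | h
      · omega
      · exact h.2 _ hu
    refine Finset.mem_filter.mpr ⟨Finset.mem_univ _, hadj, hsat, ?_⟩
    intro w hw hfw
    have hwN : w ∈ N i := (hmemN i w).2 ⟨hw, hfw.trans hfu⟩
    exact Finset.card_le_one.mp (by omega) w hwN (φ i) hu
  have hinj : Set.InjOn φ ↑T := by
    intro i hi j hj hij
    have h1 : f (φ i) = i := ((hmemN i (φ i)).1 (hφmem i hi)).2
    have h2 : f (φ j) = j := ((hmemN j (φ j)).1 (hφmem j hj)).2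
    rw [← h1, ← h2, hij]
  have hTS : T.card ≤ S.card := Finset.card_le_card_of_injOn φ hmaps hinj
  omega
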